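/- For every integer s ≥ 2 and n = 2^s, M_n ≤ (√2/π²) · π^{log₂ n} / n^{(log₂ n − 1)/2}, where M_n = min over signs b_k ∈ {1,-1} of |∑_{k=0}^{n/4-1} b_k sin((2k+1)π/n)|. -/

import Mathlib

open Real Finset

noncomputable def M (n : ℕ) : ℝ :=
  sInf {x : ℝ | ∃ b : ℕ → ℝ, (∀ k, b k = 1 ∨ b k = -1) ∧
    x = |∑ k ∈ Finset.range (n / 4), b k * Real.sin ((2 * (k : ℝ) + 1) * Real.pi / n)|}

private lemma sum_two_mul (N : ℕ) (f : ℕ → ℝ) :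
    ∑ k ∈ Finset.range (2*N), f k = ∑ m ∈ Finset.range N, (f (2*m) + f (2*m+1)) := by
  induction N with
  | zero => simp
  | succ n ih =>
    have h2 : 2 * (n+1) = (2*n+1)+1 := by ring
    rw [h2, Finset.sum_range_succ, Finset.sum_range_succ, Finset.sum_range_succ, ih]
    ring

private lemma trig (c u : ℝ) (hc : c ≠ 0) :
    Real.sin ((4*u+1)*Real.pi/(2*c)) - Real.sin ((4*u+3)*Real.pi/(2*c))
      = -2 * Real.sin (Real.pi/(2*c)) * Real.sin ((c/2 - 2*u - 1)*Real.pi/c) := by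
  rw [Real.sin_sub_sin]
  have h1 : ((4*u+1)*Real.pi/(2*c) - (4*u+3)*Real.pi/(2*c))/2 = -(Real.pi/(2*c)) := by
    field_simp; ring
  have h2 : ((4*u+1)*Real.pi/(2*c) + (4*u+3)*Real.pi/(2*c))/2
      = Real.pi/2 - (c/2 - 2*u - 1)*Real.pi/c := by
    field_simp; ring
  rw [h1, h2, Real.sin_neg, Real.cos_pi_div_two_sub]
  ring

private lemma exp_split (s : ℕ) (hs : 1 ≤ s) :
    (s+1)*s/2 = s + s*(s-1)/2 ∧ 2 ∣ s*(s-1) := by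
  obtain ⟨t, ht⟩ := Nat.even_mul_succ_self (s-1)
  have h1 : s - 1 + 1 = s := by omega
  rw [h1] at ht
  have h2 : (s+1)*s = (s-1)*s + 2*s := by
    have : s + 1 = (s-1) + 2 := by omega
    rw [this]; ring
  have h3 : s*(s-1) = (s-1)*s := Nat.mul_comm _ _
  set a := (s-1)*s with ha
  omega

private lemma key (s : ℕ) (hs : 2 ≤ s) :
    ∃ b : ℕ → ℝ, (∀ k, b k = 1 ∨ b k = -1) ∧
      |∑ k ∈ Finset.range (2^(s-2)), b k * Real.sin ((2*(k:ℝ)+1) * Real.pi / 2^s)|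
        ≤ Real.sqrt 2 * Real.pi ^ (s-2) / 2 ^ (s*(s-1)/2) := by
  induction s, hs using Nat.le_induction with
  | base =>
    refine ⟨fun _ => 1, fun _ => Or.inl rfl, ?_⟩
    have : ((2:ℝ)*(0:ℕ)+1) * Real.pi / 2^2 = Real.pi/4 := by push_cast; ring
    rw [show (2:ℕ)-2 = 0 from rfl, pow_zero, Finset.sum_range_one, this, one_mul,
      Real.sin_pi_div_four]
    rw [abs_of_nonneg (by positivity)]
    norm_num
  | succ s hs ih =>
    obtain ⟨b, hb, hsum⟩ := ih
    set N := 2^(s-2) with hN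
    refine ⟨fun k => (if k % 2 = 0 then (1:ℝ) else -1) * b (N - 1 - k/2), ?_, ?_⟩
    · intro k
      rcases hb (N - 1 - k/2) with h | h <;> by_cases hk : k % 2 = 0 <;>
        simp [hk, h]
    · have hrange : 2^(s+1-2) = 2*N := by
        rw [hN]
        have : s+1-2 = (s-2)+1 := by omega
        rw [this, pow_succ]; ring
      rw [hrange, sum_two_mul]
      have hc : ((2:ℝ)^s) ≠ 0 := by positivity
      have hterm : ∀ m ∈ Finset.range N,
          ((if (2*m) % 2 = 0 then (1:ℝ) else -1) * b (N - 1 - (2*m)/2) *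
            Real.sin ((2*((2*m:ℕ):ℝ)+1) * Real.pi / 2^(s+1)) +
           (if (2*m+1) % 2 = 0 then (1:ℝ) else -1) * b (N - 1 - (2*m+1)/2) *
            Real.sin ((2*((2*m+1:ℕ):ℝ)+1) * Real.pi / 2^(s+1)))
          = (-2 * Real.sin (Real.pi / 2^(s+1))) *
            (b (N-1-m) * Real.sin ((2*((N-1-m:ℕ):ℝ)+1) * Real.pi / 2^s)) := by
        intro m hm
        have hm' : m < N := Finset.mem_range.mp hm
        have e1 : (2*m) % 2 = 0 := by omega
        have e2 : (2*m+1) % 2 = 1 := by omega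
        have e3 : (2*m)/2 = m := by omega
        have e4 : (2*m+1)/2 = m := by omega
        rw [e1, e3, e4]
        simp only [e2]
        have hcast : ((N-1-m:ℕ):ℝ) = (N:ℝ) - 1 - m := by
          have : N - 1 - m = N - (1 + m) := by omega
          rw [this, Nat.cast_sub (by omega)]; push_cast; ring
        have hNc : (N:ℝ) = (2:ℝ)^s / 4 := by
          rw [hN]
          push_cast
          have : s = (s-2)+2 := by omega
          rw [this]
          rw [pow_add]
          norm_num
        have h2c : (2:ℝ)^(s+1) = 2 * (2:ℝ)^s := by rw [pow_succ]; ring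
        have A1 : (2*((2*m:ℕ):ℝ)+1) * Real.pi / 2^(s+1)
            = (4*(m:ℝ)+1)*Real.pi/(2*(2:ℝ)^s) := by rw [h2c]; push_cast; ring_nf
        have A2 : (2*((2*m+1:ℕ):ℝ)+1) * Real.pi / 2^(s+1)
            = (4*(m:ℝ)+3)*Real.pi/(2*(2:ℝ)^s) := by rw [h2c]; push_cast; ring_nf
        have A3 : Real.pi / 2^(s+1) = Real.pi/(2*(2:ℝ)^s) := by rw [h2c]
        have A4 : (2*((N-1-m:ℕ):ℝ)+1) * Real.pi / 2^s
            = ((2:ℝ)^s/2 - 2*(m:ℝ) - 1)*Real.pi/(2:ℝ)^s := by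
          rw [hcast, hNc]; ring
        rw [A1, A2, A3, A4]
        have htr := trig ((2:ℝ)^s) (m:ℝ) hc
        norm_num
        linear_combination b (N - 1 - m) * htr
      rw [Finset.sum_congr rfl hterm, ← Finset.mul_sum]
      have hre := Finset.sum_range_reflect
        (fun j => b j * Real.sin ((2*(j:ℝ)+1) * Real.pi / 2^s)) N
      rw [hre, abs_mul]
      have hθ0 : (0:ℝ) ≤ Real.pi / 2^(s+1) := by positivity
      have hθπ : Real.pi / 2^(s+1) ≤ Real.pi := by
        apply div_le_self Real.pi_pos.le
        exact one_le_pow₀ (by norm_num)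
      have hsin0 : 0 ≤ Real.sin (Real.pi/2^(s+1)) :=
        Real.sin_nonneg_of_nonneg_of_le_pi hθ0 hθπ
      have habs : |(-2 * Real.sin (Real.pi/2^(s+1)))| = 2 * Real.sin (Real.pi/2^(s+1)) := by
        rw [abs_of_nonpos (by nlinarith)]; ring
      rw [habs]
      have hsinle : Real.sin (Real.pi/2^(s+1)) ≤ Real.pi/2^(s+1) := Real.sin_le hθ0
      have hstep : 2 * Real.sin (Real.pi/2^(s+1)) *
            |∑ j ∈ Finset.range N, b j * Real.sin ((2*(j:ℝ)+1) * Real.pi / 2^s)|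
          ≤ 2 * (Real.pi/2^(s+1)) * (Real.sqrt 2 * Real.pi ^ (s-2) / 2 ^ (s*(s-1)/2)) := by
        apply mul_le_mul (by nlinarith) hsum (abs_nonneg _) (by positivity)
      refine le_trans hstep (le_of_eq ?_)
      have hexp : (s+1)*s/2 = s + s*(s-1)/2 := (exp_split s (by omega)).1
      have e1 : (2:ℝ)^(s + s*(s-1)/2) = 2^s * 2^(s*(s-1)/2) := pow_add 2 s _
      have e2 : Real.pi^(s-2+1) = Real.pi^(s-2) * Real.pi := pow_succ _ _
      have e3 : (2:ℝ)^(s+1) = 2^s*2 := pow_succ 2 s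
      rw [show s+1-2 = (s-2)+1 from by omega, show s+1-1 = s from rfl, hexp, e1, e2, e3]
      have h2 : ((2:ℝ)^s) ≠ 0 := by positivity
      have h3 : ((2:ℝ)^(s*(s-1)/2)) ≠ 0 := by positivity
      field_simp

theorem M_asymptotic_bound (s : ℕ) (hs : 2 ≤ s) (n : ℕ) (hn : n = 2 ^ s) :
    M n ≤ Real.sqrt 2 / Real.pi ^ 2 *
      Real.pi ^ (Real.logb 2 n) / (n : ℝ) ^ ((Real.logb 2 n - 1) / 2) := by
  subst hn
  obtain ⟨b, hb, hsum⟩ := key s hs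
  have hn4 : 2^s / 4 = 2^(s-2) := by
    have h : 2^(s-2) * 4 = 2^s := by
      rw [show (4:ℕ) = 2^2 from rfl, ← pow_add, show s-2+2 = s from by omega]
    omega
  have hcast : ((2^s : ℕ) : ℝ) = (2:ℝ)^s := by push_cast; ring
  have hlogb : Real.logb 2 ((2^s : ℕ) : ℝ) = s := by
    rw [hcast, Real.logb_pow]
    simp [Real.logb_self_eq_one]
  have hE : ((s*(s-1)/2 : ℕ) : ℝ) = (s:ℝ) * ((s:ℝ)-1) / 2 := by
    rw [Nat.cast_div (exp_split s (by omega)).2 (by norm_num)]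
    rw [Nat.cast_mul, Nat.cast_sub (by omega)]
    push_cast; ring
  have hrhs : Real.sqrt 2 / Real.pi ^ 2 *
      Real.pi ^ (Real.logb 2 ((2^s:ℕ):ℝ)) / ((2^s:ℕ) : ℝ) ^ ((Real.logb 2 ((2^s:ℕ):ℝ) - 1) / 2)
      = Real.sqrt 2 * Real.pi ^ (s-2) / 2 ^ (s*(s-1)/2) := by
    rw [hlogb, hcast]
    rw [Real.rpow_natCast Real.pi s]
    have hd : ((2:ℝ)^s) ^ (((s:ℝ) - 1)/2) = (2:ℝ) ^ (s*(s-1)/2 : ℕ) := by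
      rw [← Real.rpow_natCast (2:ℝ) s, ← Real.rpow_natCast (2:ℝ) (s*(s-1)/2),
        ← Real.rpow_mul (by norm_num), hE]
      ring_nf
    rw [hd]
    have hπ : Real.pi ^ s = Real.pi ^ (s-2) * Real.pi ^ 2 := by
      rw [← pow_add]
      congr 1
      omega
    rw [hπ]
    have : Real.pi ^ 2 ≠ 0 := by positivity
    field_simp
  rw [M, hrhs]
  refine le_trans (csInf_le (a := |∑ k ∈ Finset.range ((2^s : ℕ)/4), b k *
      Real.sin ((2*(k:ℝ)+1) * Real.pi / ((2^s:ℕ):ℝ))|) ⟨0, ?_⟩ ⟨b, hb, rfl⟩) ?_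
  · rintro x ⟨c, hc, rfl⟩
    positivity
  · rw [hn4, hcast]
    exact hsum
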